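/- Let P ⊆ ℝ^n be a pointed polyhedral set of dimension n. Then the map base_P : P → K_P sending p to the unique point x ∈ K_P with p = x + δ_P(p)·y for a unit vector y ∈ char.cone(P) is continuous. -/

import Mathlib

open scoped RealInnerProductSpace
open Set

noncomputable section

abbrev E (n : ℕ) := EuclideanSpace ℝ (Fin n)

/-- A polyhedral set: an intersection of finitely many closed half-spaces. -/
def IsPolyhedral {n : ℕ} (P : Set (E n)) : Prop :=
  ∃ (m : ℕ) (w : Fin m → E n) (b : Fin m → ℝ),
    P = {x | ∀ i, ⟪w i, x⟫ + b i ≤ 0}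

/-- The characteristic (recession) cone of `P`. -/
def charCone {n : ℕ} (P : Set (E n)) : Set (E n) := {y | ∀ x ∈ P, x + y ∈ P}

/-- The lineality space of `P`: `charCone P ∩ (−charCone P)`. -/
def linealitySpace {n : ℕ} (P : Set (E n)) : Set (E n) :=
  charCone P ∩ {y | -y ∈ charCone P}

/-- `P` is pointed if its lineality space is trivial. -/
def IsPointed {n : ℕ} (P : Set (E n)) : Prop := linealitySpace P = {0}

/-- `(w, b)` determines a supporting hyperplane of `P`. -/
def IsSupporting {n : ℕ} (w : E n) (b : ℝ) (P : Set (E n)) : Prop :=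
  w ≠ 0 ∧ (∀ x ∈ P, ⟪w, x⟫ + b ≤ 0) ∧ ∃ x ∈ P, ⟪w, x⟫ + b = 0

/-- A face of a polyhedral set: `∅`, `P` itself, or the intersection of `P` with a
supporting hyperplane. -/
def IsFace {n : ℕ} (P F : Set (E n)) : Prop :=
  F = ∅ ∨ F = P ∨ ∃ w b, IsSupporting w b P ∧ F = {x ∈ P | ⟪w, x⟫ + b = 0}

/-- A vertex (0-dimensional face) of `P`. -/
def IsVertex {n : ℕ} (P : Set (E n)) (v : E n) : Prop := IsFace P {v}

/-- `K_P`: the convex hull of the vertices of `P`. -/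
def Kpart {n : ℕ} (P : Set (E n)) : Set (E n) := convexHull ℝ {v | IsVertex P v}

/-- The set of admissible distances from `K_P` to `p` along unit directions of the
characteristic cone. -/
def deltaSet {n : ℕ} (P : Set (E n)) (p : E n) : Set ℝ :=
  {t : ℝ | 0 ≤ t ∧ ∃ x ∈ Kpart P, ∃ y ∈ charCone P, ‖y‖ = 1 ∧ p = x + t • y}

/-- `δ_P(p)`: the minimal distance from `K_P` to `p` along directions in the
characteristic cone. -/
def delta {n : ℕ} (P : Set (E n)) (p : E n) : ℝ := sInf (deltaSet P p)


open Filter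

section Aux

lemma charCone_zero {n : ℕ} (P : Set (E n)) : (0 : E n) ∈ charCone P :=
  fun x hx => by simpa using hx

lemma charCone_add {n : ℕ} {P : Set (E n)} {y z : E n}
    (hy : y ∈ charCone P) (hz : z ∈ charCone P) : y + z ∈ charCone P := by
  intro x hx
  have := hz _ (hy x hx)
  rwa [add_assoc] at this

lemma charCone_nsmul {n : ℕ} {P : Set (E n)} {y : E n}
    (hy : y ∈ charCone P) : ∀ k : ℕ, (k : ℝ) • y ∈ charCone P := by
  intro k
  induction k with
  | zero => simpa using charCone_zero P
  | succ k ih =>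
      have : ((k + 1 : ℕ) : ℝ) • y = (k : ℝ) • y + y := by
        push_cast; rw [add_smul, one_smul]
      rw [this]
      exact charCone_add ih hy

lemma charCone_smul {n : ℕ} {P : Set (E n)} (hconv : Convex ℝ P) {y : E n}
    (hy : y ∈ charCone P) {c : ℝ} (hc : 0 ≤ c) : c • y ∈ charCone P := by
  rcases eq_or_lt_of_le hc with h0 | h0
  · simpa [← h0] using charCone_zero P
  · set k : ℕ := ⌈c⌉₊ with hk
    have hck : c ≤ (k : ℝ) := Nat.le_ceil c
    have hkpos : (0 : ℝ) < k := lt_of_lt_of_le h0 hck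
    intro x hx
    have hxk : x + (k : ℝ) • y ∈ P := charCone_nsmul hy k x hx
    have h1 : 0 ≤ 1 - c / k := by
      have : c / k ≤ 1 := (div_le_one hkpos).mpr hck
      linarith
    have h2 : 0 ≤ c / k := div_nonneg hc hkpos.le
    have hmem := hconv hx hxk h1 h2 (by ring)
    have heq : (1 - c / k) • x + (c / k) • (x + (k : ℝ) • y) = x + (c / k * k) • y := by
      rw [smul_add, smul_smul]; module
    rw [heq, div_mul_cancel₀ c hkpos.ne'] at hmem
    exact hmem

lemma charCone_isClosed {n : ℕ} {P : Set (E n)} (hP : IsClosed P) :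
    IsClosed (charCone P) := by
  have : charCone P = ⋂ x ∈ P, (fun y => x + y) ⁻¹' P := by
    ext y; simp [charCone]
  rw [this]
  exact isClosed_biInter fun x _ => hP.preimage (continuous_const.add continuous_id)

lemma polyhedral_isClosed {n m : ℕ} (w : Fin m → E n) (b : Fin m → ℝ) :
    IsClosed {x : E n | ∀ i, ⟪w i, x⟫ + b i ≤ 0} := by
  have : {x : E n | ∀ i, ⟪w i, x⟫ + b i ≤ 0} = ⋂ i, {x : E n | ⟪w i, x⟫ + b i ≤ 0} := by
    ext x; simp
  rw [this]
  refine isClosed_iInter fun i => ?_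
  exact isClosed_le ((continuous_const.inner continuous_id).add continuous_const)
    continuous_const

lemma polyhedral_convex {n m : ℕ} (w : Fin m → E n) (b : Fin m → ℝ) :
    Convex ℝ {x : E n | ∀ i, ⟪w i, x⟫ + b i ≤ 0} := by
  intro x hx y hy a c ha hc hac
  intro i
  have hxi := hx i
  have hyi := hy i
  have : ⟪w i, a • x + c • y⟫ = a * ⟪w i, x⟫ + c * ⟪w i, y⟫ := by
    rw [inner_add_right, real_inner_smul_right, real_inner_smul_right]
  rw [this]
  have h1 : a * (⟪w i, x⟫ + b i) ≤ 0 := mul_nonpos_of_nonneg_of_nonpos ha hxi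
  have h2 : c * (⟪w i, y⟫ + b i) ≤ 0 := mul_nonpos_of_nonneg_of_nonpos hc hyi
  have h3 : (a + c) * b i = b i := by rw [hac, one_mul]
  nlinarith [h1, h2, h3]

lemma vertex_mem {n : ℕ} {P : Set (E n)} {v : E n} (hv : IsVertex P v) : v ∈ P := by
  rcases hv with h | h | ⟨w, b, _, h⟩
  · exact absurd h (Set.singleton_ne_empty v)
  · rw [← h]; exact rfl
  · have : v ∈ {x ∈ P | ⟪w, x⟫ + b = 0} := h ▸ rfl
    exact this.1

lemma vertices_finite {n m : ℕ} (w : Fin m → E n) (b : Fin m → ℝ) :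
    {v : E n | IsVertex {x : E n | ∀ i, ⟪w i, x⟫ + b i ≤ 0} v}.Finite := by
  set P : Set (E n) := {x : E n | ∀ i, ⟪w i, x⟫ + b i ≤ 0} with hPdef
  set act : E n → Set (Fin m) := fun v => {i | ⟪w i, v⟫ + b i = 0} with hact
  have hinj : Set.InjOn act {v | IsVertex P v} := by
    intro v hv v' hv' hvv'
    by_contra hne
    have hvP : v ∈ P := vertex_mem hv
    have hv'P : v' ∈ P := vertex_mem hv'
    rcases hv with h | h | ⟨wf, bf, hsup, heq⟩
    · exact absurd h (Set.singleton_ne_empty v)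
    · rw [← h] at hv'P
      exact hne (Set.mem_singleton_iff.mp hv'P).symm
    -- supporting hyperplane case
    have hvface : ⟪wf, v⟫ + bf = 0 := by
      have : v ∈ {x ∈ P | ⟪wf, x⟫ + bf = 0} := heq ▸ rfl
      exact this.2
    -- find ε so that v ± ε (v - v') ∈ P
    have hev : ∀ᶠ t : ℝ in nhds 0, ∀ i, ⟪w i, v + t • (v - v')⟫ + b i ≤ 0 := by
      rw [eventually_all]
      intro i
      by_cases hi : ⟪w i, v⟫ + b i = 0
      · have hi' : ⟪w i, v'⟫ + b i = 0 := by
          have : i ∈ act v := hi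
          rw [hvv'] at this
          exact this
        refine Eventually.of_forall fun t => ?_
        have : ⟪w i, v + t • (v - v')⟫ + b i
            = (⟪w i, v⟫ + b i) + t * ((⟪w i, v⟫ + b i) - (⟪w i, v'⟫ + b i)) := by
          rw [inner_add_right, real_inner_smul_right, inner_sub_right]; ring
        rw [this, hi, hi']; simp
      · have hlt : ⟪w i, v⟫ + b i < 0 := lt_of_le_of_ne (hvP i) hi
        have hcont : Continuous fun t : ℝ => ⟪w i, v + t • (v - v')⟫ + b i := by
          exact (continuous_const.inner
            (continuous_const.add (continuous_id.smul continuous_const))).add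
            continuous_const
        have h0 : (fun t : ℝ => ⟪w i, v + t • (v - v')⟫ + b i) 0 < 0 := by
          simpa using hlt
        have := (hcont.tendsto 0).eventually_lt_const h0
        exact this.mono fun t ht => le_of_lt ht
    rw [Metric.eventually_nhds_iff] at hev
    obtain ⟨ε, hε, hevb⟩ := hev
    set s : ℝ := ε / 2 with hs
    have hspos : 0 < s := by positivity
    have hu : v + s • (v - v') ∈ P := by
      refine hevb (y := s) ?_
      simp [hs, abs_of_pos hε, abs_of_pos hspos]
      linarith
    have hu' : v + (-s) • (v - v') ∈ P := by
      refine hevb (y := -s) ?_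
      simp [hs, abs_of_pos hε, abs_of_pos hspos]
      linarith
    -- both satisfy the supporting constraint with equality
    have h1 : ⟪wf, v + s • (v - v')⟫ + bf ≤ 0 := hsup.2.1 _ hu
    have h2 : ⟪wf, v + (-s) • (v - v')⟫ + bf ≤ 0 := hsup.2.1 _ hu'
    have e1 : ⟪wf, v + s • (v - v')⟫ + bf = s * ⟪wf, v - v'⟫ := by
      rw [inner_add_right, real_inner_smul_right]; linarith
    have e2 : ⟪wf, v + (-s) • (v - v')⟫ + bf = -(s * ⟪wf, v - v'⟫) := by
      rw [inner_add_right, real_inner_smul_right]; linarith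
    have hz : ⟪wf, v + s • (v - v')⟫ + bf = 0 := by
      rw [e1]; rw [e1] at h1; rw [e2] at h2; linarith
    have humem : v + s • (v - v') ∈ ({v} : Set (E n)) := by
      rw [heq]; exact ⟨hu, hz⟩
    have : s • (v - v') = 0 := by
      have := Set.mem_singleton_iff.mp humem
      have h := congrArg (fun z => z - v) this
      simpa [add_sub_cancel_left] using h
    rcases smul_eq_zero.mp this with h | h
    · exact absurd h hspos.ne'
    · exact hne (sub_eq_zero.mp h)
  have himg : (act '' {v | IsVertex P v}).Finite := Set.toFinite _
  exact Set.Finite.of_finite_image himg hinj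

lemma delta_nonneg {n : ℕ} (P : Set (E n)) (p : E n) : 0 ≤ delta P p :=
  Real.sInf_nonneg fun _ ht => ht.1

lemma delta_le {n : ℕ} {P : Set (E n)} {p : E n} {t : ℝ} (ht : t ∈ deltaSet P p) :
    delta P p ≤ t :=
  csInf_le ⟨0, fun _ hs => hs.1⟩ ht

lemma delta_le_norm {n : ℕ} {P : Set (E n)} (hconv : Convex ℝ P)
    (hunit : ∃ y ∈ charCone P, ‖y‖ = 1) {x c : E n}
    (hx : x ∈ Kpart P) (hc : c ∈ charCone P) : delta P (x + c) ≤ ‖c‖ := by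
  by_cases h0 : c = 0
  · subst h0
    obtain ⟨y, hy, hy1⟩ := hunit
    have : (0 : ℝ) ∈ deltaSet P (x + 0) := by
      exact ⟨le_refl 0, x, hx, y, hy, hy1, by simp⟩
    simpa using delta_le this
  · have hnpos : 0 < ‖c‖ := norm_pos_iff.mpr h0
    have hmem : ‖c‖ ∈ deltaSet P (x + c) := by
      refine ⟨hnpos.le, x, hx, ‖c‖⁻¹ • c, charCone_smul hconv hc (by positivity), ?_, ?_⟩
      · rw [norm_smul, norm_inv, norm_norm, inv_mul_cancel₀ hnpos.ne']
      · rw [smul_smul, mul_inv_cancel₀ hnpos.ne', one_smul]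
    exact delta_le hmem

/-- Uniqueness of the base point. -/
lemma base_unique {n : ℕ} {P : Set (E n)} (hconv : Convex ℝ P) {p x₁ x₂ y₁ y₂ : E n}
    (hx₁ : x₁ ∈ Kpart P) (hy₁ : y₁ ∈ charCone P) (hn₁ : ‖y₁‖ = 1)
    (hp₁ : p = x₁ + delta P p • y₁)
    (hx₂ : x₂ ∈ Kpart P) (hy₂ : y₂ ∈ charCone P) (hn₂ : ‖y₂‖ = 1)
    (hp₂ : p = x₂ + delta P p • y₂) : x₁ = x₂ := by
  set t : ℝ := delta P p with htdef
  have ht0 : 0 ≤ t := delta_nonneg P p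
  rcases eq_or_lt_of_le ht0 with h0 | h0
  · rw [← h0] at hp₁ hp₂
    simp only [zero_smul, add_zero] at hp₁ hp₂
    rw [← hp₁, ← hp₂]
  -- t > 0
  set z : E n := (2 : ℝ)⁻¹ • (y₁ + y₂) with hz
  have hzC : z ∈ charCone P := charCone_smul hconv (charCone_add hy₁ hy₂) (by norm_num)
  set s : ℝ := ‖z‖ with hsdef
  have hs1 : s ≤ 1 := by
    have : ‖y₁ + y₂‖ ≤ 2 := by
      calc ‖y₁ + y₂‖ ≤ ‖y₁‖ + ‖y₂‖ := norm_add_le _ _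
      _ = 2 := by rw [hn₁, hn₂]; norm_num
    rw [hsdef, hz, norm_smul]
    simp only [norm_inv, Real.norm_ofNat]
    linarith
  have hKconv : Convex ℝ (Kpart P) := convex_convexHull ℝ _
  have hmidK : (2 : ℝ)⁻¹ • (x₁ + x₂) ∈ Kpart P := by
    have := hKconv hx₁ hx₂ (by norm_num : (0:ℝ) ≤ 2⁻¹) (by norm_num : (0:ℝ) ≤ 2⁻¹)
      (by norm_num)
    rwa [smul_add]
  have hmid : p = (2 : ℝ)⁻¹ • (x₁ + x₂) + t • z := by
    have h := congrArg₂ (· + ·) hp₁ hp₂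
    have h2 : p + p = (x₁ + t • y₁) + (x₂ + t • y₂) := h
    have : (2:ℝ)⁻¹ • (p + p) = (2:ℝ)⁻¹ • ((x₁ + t • y₁) + (x₂ + t • y₂)) :=
      congrArg _ h2
    calc p = (2:ℝ)⁻¹ • (p + p) := by module
    _ = (2:ℝ)⁻¹ • ((x₁ + t • y₁) + (x₂ + t • y₂)) := this
    _ = (2 : ℝ)⁻¹ • (x₁ + x₂) + t • ((2:ℝ)⁻¹ • (y₁ + y₂)) := by module
  rcases lt_or_eq_of_le hs1 with hslt | hseq
  · -- s < 1 : contradiction with minimality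
    exfalso
    rcases eq_or_lt_of_le (norm_nonneg z) with hs0 | hs0
    · -- z = 0, so p ∈ Kpart P and 0 ∈ deltaSet
      have hz0 : z = 0 := norm_eq_zero.mp hs0.symm
      have hpK : p ∈ Kpart P := by
        rw [hmid, hz0, smul_zero, add_zero] at *
        exact hmidK
      have : (0:ℝ) ∈ deltaSet P p := ⟨le_refl 0, p, hpK, y₁, hy₁, hn₁, by simp⟩
      have := delta_le this
      rw [← htdef] at this
      linarith
    · -- 0 < s < 1
      have hyC : s⁻¹ • z ∈ charCone P := charCone_smul hconv hzC (by positivity)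
      have hyn : ‖s⁻¹ • z‖ = 1 := by
        rw [norm_smul, norm_inv, Real.norm_eq_abs, abs_of_pos hs0, ← hsdef,
          inv_mul_cancel₀ hs0.ne']
      have hrep : p = (2 : ℝ)⁻¹ • (x₁ + x₂) + (t * s) • (s⁻¹ • z) := by
        rw [smul_smul, mul_assoc, mul_inv_cancel₀ hs0.ne', mul_one]
        exact hmid
      have hmem : t * s ∈ deltaSet P p :=
        ⟨mul_nonneg ht0 hs0.le, _, hmidK, _, hyC, hyn, hrep⟩
      have hle := delta_le hmem
      rw [← htdef] at hle
      nlinarith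
  · -- s = 1 : y₁ = y₂, hence x₁ = x₂
    have hsum : ‖y₁ + y₂‖ = 2 := by
      have : (2:ℝ)⁻¹ * ‖y₁ + y₂‖ = 1 := by
        rw [hsdef, hz, norm_smul] at hseq
        simpa using hseq
      linarith
    have hinner : ⟪y₁, y₂⟫ = 1 := by
      have h1 := norm_add_sq_real y₁ y₂
      rw [hsum, hn₁, hn₂] at h1
      nlinarith [h1]
    have hdiff : ‖y₁ - y₂‖ ^ 2 = 0 := by
      rw [norm_sub_sq_real, hn₁, hn₂, hinner]
      norm_num
    have hyy : y₁ = y₂ := by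
      have : ‖y₁ - y₂‖ = 0 := by
        have := sq_eq_zero_iff.mp hdiff
        exact this
      rw [norm_eq_zero, sub_eq_zero] at this
      exact this
    rw [hp₂, hyy] at hp₁
    exact add_right_cancel hp₁.symm

end Aux

set_option maxHeartbeats 1600000 in
/-- The base map of a full-dimensional pointed polyhedral set is continuous:
any function realizing the unique minimizing point is continuous on P. -/
theorem base_continuousOn {n : ℕ} (Pset : Set (E n))
    (hP : IsPolyhedral Pset) (hptd : IsPointed Pset)
    (hfull : (interior Pset).Nonempty)
    (f : E n → E n)
    (hf : ∀ p ∈ Pset, f p ∈ Kpart Pset ∧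
      ∃ y ∈ charCone Pset, ‖y‖ = 1 ∧ p = f p + delta Pset p • y) :
    ContinuousOn f Pset := by
  obtain ⟨m, w, b, hPeq⟩ := hP
  have hmem : ∀ x : E n, x ∈ Pset ↔ ∀ i, ⟪w i, x⟫ + b i ≤ 0 := fun x => by
    rw [hPeq]; exact Iff.rfl
  have hclosed : IsClosed Pset := by rw [hPeq]; exact polyhedral_isClosed w b
  have hconv : Convex ℝ Pset := by rw [hPeq]; exact polyhedral_convex w b
  have hKfin : {v : E n | IsVertex Pset v}.Finite := by
    rw [hPeq]; exact vertices_finite w b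
  have hKcpt : IsCompact (Kpart Pset) := hKfin.isCompact_convexHull ℝ
  have hKconv : Convex ℝ (Kpart Pset) := convex_convexHull ℝ _
  have hCclosed : IsClosed (charCone Pset) := charCone_isClosed hclosed
  have hunit : ∃ y ∈ charCone Pset, ‖y‖ = 1 := by
    obtain ⟨p₀, hp₀⟩ := hfull
    obtain ⟨-, y, hy, hy1, -⟩ := hf p₀ (interior_subset hp₀)
    exact ⟨y, hy, hy1⟩
  obtain ⟨R₀, hR₀⟩ := hKcpt.isBounded.exists_norm_le
  set R : ℝ := max R₀ 0 with hRdef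
  have hR0 : 0 ≤ R := le_max_right _ _
  have hRb : ∀ x ∈ Kpart Pset, ‖x‖ ≤ R := fun x hx => (hR₀ x hx).trans (le_max_left _ _)
  have hdelta_eq : ∀ q ∈ Pset, delta Pset q = ‖q - f q‖ := by
    intro q hq
    obtain ⟨hfq, y, hy, hy1, hrep⟩ := hf q hq
    have h2 : q - f q = delta Pset q • y := by
      have := congrArg (fun z => z - f q) hrep
      simpa [add_sub_cancel_left] using this
    rw [h2, norm_smul, hy1, Real.norm_eq_abs, abs_of_nonneg (delta_nonneg _ _), mul_one]
  -- upper semicontinuity of delta on Pset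
  have husc : ∀ p ∈ Pset, ∀ ε : ℝ, 0 < ε →
      ∀ᶠ q in nhdsWithin p Pset, delta Pset q ≤ delta Pset p + ε := by
    intro p hp ε hε
    obtain ⟨M₀, hM₀⟩ : ∃ M₀ : ℝ, M₀ = ‖p‖ + R + 1 := ⟨_, rfl⟩
    have hM₀pos : 0 < M₀ := by
      have := norm_nonneg p
      rw [hM₀]; linarith
    have hdb : ∀ z ∈ Pset, ‖z - p‖ ≤ 1 → delta Pset z ≤ M₀ := by
      intro z hz h1
      rw [hdelta_eq z hz]
      have t0 : z - f z = (z - p) + (p - f z) := by abel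
      have t1 : ‖z - f z‖ ≤ ‖z - p‖ + ‖p - f z‖ := by rw [t0]; exact norm_add_le _ _
      have t2 : ‖p - f z‖ ≤ ‖p‖ + ‖f z‖ := norm_sub_le _ _
      have t3 : ‖f z‖ ≤ R := hRb _ (hf z hz).1
      rw [hM₀]; linarith
    obtain ⟨A, hA⟩ : ∃ A : Fin m → ℝ, ∀ i, A i = ⟪w i, p⟫ + b i := ⟨_, fun _ => rfl⟩
    have hAle : ∀ i, A i ≤ 0 := fun i => by rw [hA i]; exact (hmem p).1 hp i
    obtain ⟨c, hc⟩ : ∃ c : ℝ, c = 1 + ∑ i, (if A i < 0 then ‖w i‖ / (-A i) else 0) :=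
      ⟨_, rfl⟩
    have hcterm : ∀ i, 0 ≤ (if A i < 0 then ‖w i‖ / (-A i) else 0) := by
      intro i
      split_ifs with hi
      · exact div_nonneg (norm_nonneg _) (by linarith)
      · exact le_refl 0
    have hc1 : 1 ≤ c := by
      have := Finset.sum_nonneg (s := Finset.univ) (fun i _ => hcterm i)
      rw [hc]; linarith
    have hcpos : 0 < c := by linarith
    have hkey : ∀ i, A i < 0 → ‖w i‖ ≤ c * (-A i) := by
      intro i hi
      have h1 : ‖w i‖ / (-A i) ≤ c := by
        have hterm_le := Finset.single_le_sum (fun j (_ : j ∈ Finset.univ) => hcterm j)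
          (Finset.mem_univ i)
        rw [if_pos hi] at hterm_le
        rw [hc]; linarith
      have hApos : 0 < -A i := by linarith
      calc ‖w i‖ = (‖w i‖ / (-A i)) * (-A i) := (div_mul_cancel₀ _ hApos.ne').symm
      _ ≤ c * (-A i) := mul_le_mul_of_nonneg_right h1 hApos.le
    obtain ⟨r, hr⟩ : ∃ r : ℝ, r = min 1 (min ((c⁻¹) ^ 2) ((ε / (c * M₀)) ^ 2)) := ⟨_, rfl⟩
    have hrpos : 0 < r := by
      rw [hr]
      simp only [lt_min_iff]
      exact ⟨one_pos, pow_pos (inv_pos.mpr hcpos) 2,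
        pow_pos (div_pos hε (mul_pos hcpos hM₀pos)) 2⟩
    have hball : ∀ᶠ q in nhdsWithin p Pset, dist q p < r := by
      have hb : Metric.ball p r ∈ nhdsWithin p Pset :=
        nhdsWithin_le_nhds (Metric.ball_mem_nhds p hrpos)
      exact Filter.eventually_of_mem hb fun q hq => by
        simpa [Metric.mem_ball] using hq
    have hmemq : ∀ᶠ q in nhdsWithin p Pset, q ∈ Pset := eventually_mem_nhdsWithin
    filter_upwards [hball, hmemq] with q hq1 hq2
    by_cases hqp : q = p
    · subst hqp; linarith
    obtain ⟨h, hh⟩ : ∃ h : ℝ, h = ‖q - p‖ := ⟨_, rfl⟩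
    have hhpos : 0 < h := by
      rw [hh]; exact norm_pos_iff.mpr (sub_ne_zero.mpr hqp)
    have hdq : dist q p = h := by rw [dist_eq_norm, hh]
    rw [hdq, hr] at hq1
    have hh1 : h < 1 := lt_of_lt_of_le hq1 (min_le_left _ _)
    have hhc : h < (c⁻¹) ^ 2 :=
      lt_of_lt_of_le hq1 ((min_le_right _ _).trans (min_le_left _ _))
    have hhε : h < (ε / (c * M₀)) ^ 2 :=
      lt_of_lt_of_le hq1 ((min_le_right _ _).trans (min_le_right _ _))
    obtain ⟨sh, hsq⟩ : ∃ sh : ℝ, sh = Real.sqrt h := ⟨_, rfl⟩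
    have hsqpos : 0 < sh := hsq ▸ Real.sqrt_pos.mpr hhpos
    have hsq2 : sh * sh = h := hsq ▸ Real.mul_self_sqrt hhpos.le
    have hsq1 : sh ≤ 1 := by rw [hsq, show (1:ℝ) = Real.sqrt 1 by simp]; exact Real.sqrt_le_sqrt hh1.le
    have hsqc : sh ≤ c⁻¹ := by
      have h1 := Real.sqrt_le_sqrt hhc.le
      rw [Real.sqrt_sq (inv_nonneg.mpr hcpos.le)] at h1
      rw [hsq]; exact h1
    have hsqε : sh ≤ ε / (c * M₀) := by
      have h1 := Real.sqrt_le_sqrt hhε.le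
      rw [Real.sqrt_sq (div_nonneg hε.le (mul_nonneg hcpos.le hM₀pos.le))] at h1
      rw [hsq]; exact h1
    obtain ⟨lam, hlam⟩ : ∃ lam : ℝ, lam = c * sh := ⟨_, rfl⟩
    have hlampos : 0 < lam := hlam ▸ mul_pos hcpos hsqpos
    have hlam1 : lam ≤ 1 := by
      calc lam = c * sh := hlam
      _ ≤ c * c⁻¹ := mul_le_mul_of_nonneg_left hsqc hcpos.le
      _ = 1 := mul_inv_cancel₀ hcpos.ne'
    obtain ⟨z, hzdef⟩ : ∃ z : E n, z = p + lam⁻¹ • (q - p) := ⟨_, rfl⟩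
    have hzP : z ∈ Pset := by
      rw [hmem]
      intro i
      have hD : ⟪w i, z⟫ + b i = A i + lam⁻¹ * ⟪w i, q - p⟫ := by
        rw [hzdef, inner_add_right, real_inner_smul_right, hA i]; ring
      rw [hD]
      by_cases hi : A i < 0
      · rcases le_or_gt ⟪w i, q - p⟫ 0 with hD0 | hD0
        · have h1 : lam⁻¹ * ⟪w i, q - p⟫ ≤ 0 :=
            mul_nonpos_of_nonneg_of_nonpos (inv_nonneg.mpr hlampos.le) hD0
          exact add_nonpos hi.le h1
        · have hw := hkey i hi
          have hhsq : h ≤ sh := by nlinarith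
          have hcApos : 0 ≤ c * (-A i) := by nlinarith
          have hDle2 : ⟪w i, q - p⟫ ≤ lam * (-A i) := by
            calc ⟪w i, q - p⟫ ≤ ‖w i‖ * ‖q - p‖ := real_inner_le_norm _ _
            _ = ‖w i‖ * h := by rw [hh]
            _ ≤ (c * (-A i)) * h := mul_le_mul_of_nonneg_right hw hhpos.le
            _ ≤ (c * (-A i)) * sh := mul_le_mul_of_nonneg_left hhsq hcApos
            _ = lam * (-A i) := by rw [hlam]; ring
          have h2 : lam⁻¹ * ⟪w i, q - p⟫ ≤ lam⁻¹ * (lam * (-A i)) :=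
            mul_le_mul_of_nonneg_left hDle2 (inv_nonneg.mpr hlampos.le)
          rw [← mul_assoc, inv_mul_cancel₀ hlampos.ne', one_mul] at h2
          linarith
      · have hA0 : A i = 0 := le_antisymm (hAle i) (not_lt.mp hi)
        have hqi : ⟪w i, q⟫ + b i ≤ 0 := (hmem q).1 hq2 i
        have hD0 : ⟪w i, q - p⟫ ≤ 0 := by
          rw [inner_sub_right]
          have he : ⟪w i, q⟫ - ⟪w i, p⟫ = (⟪w i, q⟫ + b i) - A i := by rw [hA i]; ring
          rw [he, hA0]; linarith
        have h1 : lam⁻¹ * ⟪w i, q - p⟫ ≤ 0 :=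
          mul_nonpos_of_nonneg_of_nonpos (inv_nonneg.mpr hlampos.le) hD0
        rw [hA0, zero_add]; exact h1
    have hzp : ‖z - p‖ ≤ 1 := by
      have he : z - p = lam⁻¹ • (q - p) := by rw [hzdef]; abel
      rw [he, norm_smul, Real.norm_eq_abs, abs_of_pos (inv_pos.mpr hlampos), ← hh]
      have he2 : lam⁻¹ * h = sh / c := by
        rw [hlam, ← hsq2]; field_simp
      rw [he2]
      rw [div_le_one hcpos]
      linarith
    have hzδ : delta Pset z ≤ M₀ := hdb z hzP hzp
    obtain ⟨hfpK, yp, hyp, hyp1, hrp⟩ := hf p hp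
    obtain ⟨hfzK, yz, hyz, hyz1, hrz⟩ := hf z hzP
    have hq_eq : q = (1 - lam) • p + lam • z := by
      rw [hzdef, smul_add, smul_smul, mul_inv_cancel₀ hlampos.ne', one_smul]
      module
    have hq_dec : q = ((1 - lam) • f p + lam • f z)
        + (((1 - lam) * delta Pset p) • yp + (lam * delta Pset z) • yz) := by
      calc q = (1 - lam) • p + lam • z := hq_eq
      _ = (1 - lam) • (f p + delta Pset p • yp) + lam • (f z + delta Pset z • yz) := by
          rw [← hrp, ← hrz]
      _ = ((1 - lam) • f p + lam • f z)
        + (((1 - lam) * delta Pset p) • yp + (lam * delta Pset z) • yz) := by module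
    have hxK : (1 - lam) • f p + lam • f z ∈ Kpart Pset :=
      hKconv hfpK hfzK (sub_nonneg.mpr hlam1) hlampos.le (by ring)
    have hcC : ((1 - lam) * delta Pset p) • yp + (lam * delta Pset z) • yz
        ∈ charCone Pset :=
      charCone_add
        (charCone_smul hconv hyp (mul_nonneg (sub_nonneg.mpr hlam1) (delta_nonneg _ _)))
        (charCone_smul hconv hyz (mul_nonneg hlampos.le (delta_nonneg _ _)))
    have hdle : delta Pset q
        ≤ ‖((1 - lam) * delta Pset p) • yp + (lam * delta Pset z) • yz‖ := by
      have := delta_le_norm hconv hunit hxK hcC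
      rwa [← hq_dec] at this
    have hnorm : ‖((1 - lam) * delta Pset p) • yp + (lam * delta Pset z) • yz‖
        ≤ (1 - lam) * delta Pset p + lam * delta Pset z := by
      have t1 := norm_add_le (((1 - lam) * delta Pset p) • yp) ((lam * delta Pset z) • yz)
      rw [norm_smul, norm_smul, hyp1, hyz1, Real.norm_eq_abs, Real.norm_eq_abs,
        abs_of_nonneg (mul_nonneg (by linarith : (0:ℝ) ≤ 1 - lam) (delta_nonneg _ _)),
        abs_of_nonneg (mul_nonneg hlampos.le (delta_nonneg _ _))] at t1
      simpa using t1
    have hlamM : lam * M₀ ≤ ε := by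
      have h1 : lam * M₀ = c * M₀ * sh := by rw [hlam]; ring
      have h2 : c * M₀ * sh ≤ c * M₀ * (ε / (c * M₀)) :=
        mul_le_mul_of_nonneg_left hsqε (mul_nonneg hcpos.le hM₀pos.le)
      have h3 : c * M₀ * (ε / (c * M₀)) = ε := by field_simp
      linarith
    have hδp0 := delta_nonneg Pset p
    have hlamz : lam * delta Pset z ≤ lam * M₀ :=
      mul_le_mul_of_nonneg_left hzδ hlampos.le
    have hfinal : (1 - lam) * delta Pset p + lam * delta Pset z ≤ delta Pset p + ε := by
      nlinarith
    linarith
  -- main argument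
  intro p hp
  have : Tendsto f (nhdsWithin p Pset) (nhds (f p)) := by
    apply tendsto_of_subseq_tendsto
    intro ns hns
    have hmemns : ∀ᶠ k in atTop, ns k ∈ Pset := hns.eventually eventually_mem_nhdsWithin
    obtain ⟨N, hN⟩ := eventually_atTop.mp hmemns
    set rs : ℕ → E n := fun k => ns (k + N) with hrs
    have hrsP : ∀ k, rs k ∈ Pset := fun k => hN _ (Nat.le_add_left N k)
    have hrsp : Tendsto rs atTop (nhds p) :=
      (hns.mono_right nhdsWithin_le_nhds).comp (tendsto_add_atTop_nat N)
    have hfK : ∀ k, f (rs k) ∈ Kpart Pset := fun k => (hf _ (hrsP k)).1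
    obtain ⟨x, hxK, φ, hφ, hφtend⟩ := hKcpt.tendsto_subseq hfK
    set rr : ℕ → E n := fun j => rs (φ j) with hrr
    have hrrP : ∀ j, rr j ∈ Pset := fun j => hrsP (φ j)
    have hrrp : Tendsto rr atTop (nhds p) := hrsp.comp hφ.tendsto_atTop
    have hfrr : Tendsto (fun j => f (rr j)) atTop (nhds x) := hφtend
    -- p - x ∈ charCone
    have hsubC : ∀ j, rr j - f (rr j) ∈ charCone Pset := by
      intro j
      obtain ⟨-, y, hy, hy1, hrep⟩ := hf _ (hrrP j)
      have h2 : rr j - f (rr j) = delta Pset (rr j) • y := by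
        have := congrArg (fun z => z - f (rr j)) hrep
        simpa [add_sub_cancel_left] using this
      rw [h2]
      exact charCone_smul hconv hy (delta_nonneg _ _)
    have hsubtend : Tendsto (fun j => rr j - f (rr j)) atTop (nhds (p - x)) :=
      hrrp.sub hfrr
    have hpxC : p - x ∈ charCone Pset :=
      hCclosed.mem_of_tendsto hsubtend (Filter.Eventually.of_forall hsubC)
    set t : ℝ := ‖p - x‖ with ht
    have hδtend : Tendsto (fun j => delta Pset (rr j)) atTop (nhds t) := by
      have : (fun j => delta Pset (rr j)) = fun j => ‖rr j - f (rr j)‖ := by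
        funext j; exact hdelta_eq _ (hrrP j)
      rw [this, ht]
      exact hsubtend.norm
    have hδle : delta Pset p ≤ t := by
      have := delta_le_norm hconv hunit hxK hpxC
      rwa [add_sub_cancel] at this
    have hle2 : t ≤ delta Pset p := by
      refine le_of_forall_pos_le_add ?_
      intro ε hε
      have hrrW : Tendsto rr atTop (nhdsWithin p Pset) :=
        tendsto_nhdsWithin_iff.mpr ⟨hrrp, Filter.Eventually.of_forall hrrP⟩
      exact le_of_tendsto hδtend (hrrW.eventually (husc p hp ε hε))
    have htδ : t = delta Pset p := le_antisymm hle2 hδle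
    -- x = f p
    obtain ⟨hfpK, yp, hyp, hyp1, hrp⟩ := hf p hp
    have hxfp : x = f p := by
      rcases eq_or_lt_of_le (norm_nonneg (p - x)) with h0 | h0
      · have hpx : p = x := by
          have h1 : ‖p - x‖ = 0 := by rw [← ht] at h0 ⊢; exact h0.symm
          exact sub_eq_zero.mp (norm_eq_zero.mp h1)
        have hδ0 : delta Pset p = 0 := by rw [← htδ, ht, hpx, sub_self, norm_zero]
        rw [hδ0, zero_smul, add_zero] at hrp
        rw [← hpx]; exact hrp
      · have htpos : 0 < t := ht ▸ h0
        have hyC : t⁻¹ • (p - x) ∈ charCone Pset :=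
          charCone_smul hconv hpxC (inv_nonneg.mpr htpos.le)
        have hyn : ‖t⁻¹ • (p - x)‖ = 1 := by
          rw [norm_smul, Real.norm_eq_abs, abs_of_pos (inv_pos.mpr htpos), ← ht,
            inv_mul_cancel₀ htpos.ne']
        have hrep : p = x + delta Pset p • (t⁻¹ • (p - x)) := by
          rw [← htδ, smul_smul, mul_inv_cancel₀ htpos.ne', one_smul]
          abel
        exact base_unique hconv hxK hyC hyn hrep hfpK hyp hyp1 hrp
    refine ⟨fun j => φ j + N, ?_⟩
    have heq : (fun j => f (ns (φ j + N))) = fun j => f (rr j) := rfl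
    rw [heq, ← hxfp]
    exact hfrr
  exact this
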